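/- Let f : ℝ³ → ℝ be nonnegative, bounded by M, supported in {v : |v²| ≤ γ, |v³| ≤ γ} ∩ {|v¹| ≤ Q} with γ ≥ 1 and Q ≥ e (Euler's number). Then ρ − P₁ := ∫_{ℝ³} (v⁰ − (v¹)²/v⁰) f(v) dv = ∫_{ℝ³} (1 + (v²)² + (v³)²)/v⁰ · f(v) dv ≤ 8 M γ² (1+2γ²) (1 + ln Q), where v⁰ = √(1+|v|²). -/

import Mathlib

open MeasureTheory

noncomputable def aux0 (Q : ℝ) : ℝ → ℝ := fun t =>
  (Set.Icc (-1:ℝ) 1).indicator (fun _ => (1:ℝ)) t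
    + (Set.Icc (1:ℝ) Q).indicator (fun t => t⁻¹) t
    + (Set.Icc (-Q) (-1:ℝ)).indicator (fun t => (-t)⁻¹) t

noncomputable def aux1 (γ : ℝ) : ℝ → ℝ := (Set.Icc (-γ) γ).indicator (fun _ => (1:ℝ))

lemma aux0_nonneg (Q : ℝ) (t : ℝ) : 0 ≤ aux0 Q t := by
  unfold aux0
  have h1 : (0:ℝ) ≤ (Set.Icc (-1:ℝ) 1).indicator (fun _ => (1:ℝ)) t :=
    Set.indicator_nonneg (fun _ _ => by norm_num) t
  have h2 : (0:ℝ) ≤ (Set.Icc (1:ℝ) Q).indicator (fun t => t⁻¹) t :=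
    Set.indicator_nonneg (fun x hx => by
      have := hx.1; positivity) t
  have h3 : (0:ℝ) ≤ (Set.Icc (-Q) (-1:ℝ)).indicator (fun t => (-t)⁻¹) t :=
    Set.indicator_nonneg (fun x hx => by
      have hx2 := hx.2
      have : (0:ℝ) < -x := by linarith
      positivity) t
  linarith

lemma aux1_nonneg (γ : ℝ) (t : ℝ) : 0 ≤ aux1 γ t :=
  Set.indicator_nonneg (fun _ _ => by norm_num) t

lemma aux0_int1 : Integrable ((Set.Icc (-1:ℝ) 1).indicator (fun _ => (1:ℝ))) := by
  refine (IntegrableOn.integrable_indicator ?_ measurableSet_Icc)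
  exact integrableOn_const measure_Icc_lt_top.ne

lemma aux0_int2 (Q : ℝ) : Integrable ((Set.Icc (1:ℝ) Q).indicator (fun t : ℝ => t⁻¹)) := by
  refine (IntegrableOn.integrable_indicator ?_ measurableSet_Icc)
  refine ContinuousOn.integrableOn_Icc ?_
  exact ContinuousOn.inv₀ continuousOn_id (fun x hx => by
    have := hx.1; intro h; linarith)

lemma aux0_int3 (Q : ℝ) : Integrable ((Set.Icc (-Q) (-1:ℝ)).indicator (fun t : ℝ => (-t)⁻¹)) := by
  refine (IntegrableOn.integrable_indicator ?_ measurableSet_Icc)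
  refine ContinuousOn.integrableOn_Icc ?_
  refine ContinuousOn.inv₀ (continuousOn_id.neg) (fun x hx => by
    have := hx.2; intro h; simp only [id_eq, neg_eq_zero] at h; linarith)

lemma aux0_integrable (Q : ℝ) : Integrable (aux0 Q) := by
  unfold aux0
  have h12 : Integrable (fun t : ℝ => (Set.Icc (-1:ℝ) 1).indicator (fun _ => (1:ℝ)) t
      + (Set.Icc (1:ℝ) Q).indicator (fun t : ℝ => t⁻¹) t) := aux0_int1.add (aux0_int2 Q)
  exact h12.add (aux0_int3 Q)

lemma aux1_integrable (γ : ℝ) : Integrable (aux1 γ) := by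
  unfold aux1
  refine (IntegrableOn.integrable_indicator ?_ measurableSet_Icc)
  exact integrableOn_const measure_Icc_lt_top.ne

lemma aux0_integral (Q : ℝ) (hQ : 1 ≤ Q) : ∫ t, aux0 Q t = 2 + 2 * Real.log Q := by
  unfold aux0
  have h12 : Integrable (fun t : ℝ => (Set.Icc (-1:ℝ) 1).indicator (fun _ => (1:ℝ)) t
      + (Set.Icc (1:ℝ) Q).indicator (fun t : ℝ => t⁻¹) t) := aux0_int1.add (aux0_int2 Q)
  rw [integral_add h12 (aux0_int3 Q), integral_add aux0_int1 (aux0_int2 Q)]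
  have e1 : ∫ t, (Set.Icc (-1:ℝ) 1).indicator (fun _ => (1:ℝ)) t = 2 := by
    rw [integral_indicator_const (1:ℝ) measurableSet_Icc]
    rw [Real.volume_real_Icc_of_le (by norm_num)]
    norm_num
  have e2 : ∫ t, (Set.Icc (1:ℝ) Q).indicator (fun t : ℝ => t⁻¹) t = Real.log Q := by
    rw [integral_indicator measurableSet_Icc, integral_Icc_eq_integral_Ioc,
      ← intervalIntegral.integral_of_le hQ, integral_inv (by
        intro h
        rw [Set.mem_uIcc] at h
        rcases h with h | h <;> linarith)]
    simp
  have e3 : ∫ t, (Set.Icc (-Q) (-1:ℝ)).indicator (fun t : ℝ => (-t)⁻¹) t = Real.log Q := by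
    rw [integral_indicator measurableSet_Icc, integral_Icc_eq_integral_Ioc,
      ← intervalIntegral.integral_of_le (by linarith : -Q ≤ (-1:ℝ))]
    rw [intervalIntegral.integral_comp_neg (fun t : ℝ => t⁻¹)]
    rw [integral_inv (by
        intro h
        rw [Set.mem_uIcc] at h
        rcases h with h | h <;> simp at h <;> linarith)]
    simp
  rw [e1, e2, e3]; ring

lemma aux1_integral (γ : ℝ) (hγ : 0 ≤ γ) : ∫ t, aux1 γ t = 2 * γ := by
  unfold aux1
  rw [integral_indicator_const (1:ℝ) measurableSet_Icc, Real.volume_real_Icc_of_le (by linarith)]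
  rw [smul_eq_mul]
  ring

lemma aux0_ge (Q : ℝ) (hQ : 1 ≤ Q) (t : ℝ) (ht : |t| ≤ Q) : (max 1 |t|)⁻¹ ≤ aux0 Q t := by
  have h1 : (0:ℝ) ≤ (Set.Icc (-1:ℝ) 1).indicator (fun _ => (1:ℝ)) t :=
    Set.indicator_nonneg (fun _ _ => by norm_num) t
  have h2 : (0:ℝ) ≤ (Set.Icc (1:ℝ) Q).indicator (fun t => t⁻¹) t :=
    Set.indicator_nonneg (fun x hx => by have := hx.1; positivity) t
  have h3 : (0:ℝ) ≤ (Set.Icc (-Q) (-1:ℝ)).indicator (fun t => (-t)⁻¹) t :=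
    Set.indicator_nonneg (fun x hx => by
      have hx2 := hx.2
      have : (0:ℝ) < -x := by linarith
      positivity) t
  unfold aux0
  rcases le_or_gt |t| 1 with h | h
  · have hm : max 1 |t| = 1 := max_eq_left h
    have ht1 : t ∈ Set.Icc (-1:ℝ) 1 := Set.mem_Icc.2 (abs_le.1 h)
    rw [hm, Set.indicator_of_mem ht1]
    simp only [inv_one]
    linarith
  · have hm : max 1 |t| = |t| := max_eq_right h.le
    rw [hm]
    rcases le_or_gt 0 t with h0 | h0
    · have habs : |t| = t := abs_of_nonneg h0
      have ht1 : t ∈ Set.Icc (1:ℝ) Q :=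
        Set.mem_Icc.2 ⟨by rw [habs] at h; linarith, by rw [habs] at ht; exact ht⟩
      rw [Set.indicator_of_mem ht1, habs]
      linarith
    · have habs : |t| = -t := abs_of_neg h0
      have ht1 : t ∈ Set.Icc (-Q) (-1:ℝ) :=
        Set.mem_Icc.2 ⟨by rw [habs] at ht; linarith, by rw [habs] at h; linarith⟩
      rw [Set.indicator_of_mem ht1, habs]
      linarith

/-- Cancellation estimate for `ρ − P₁`: for a nonnegative `f ≤ M` supported in
`{|v²| ≤ γ, |v³| ≤ γ, |v¹| ≤ Q}` with `γ ≥ 1` and `Q ≥ e`, one has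
`ρ − P₁ = ∫ (v⁰ − (v¹)²/v⁰) f dv = ∫ (1+(v²)²+(v³)²)/v⁰ · f dv
  ≤ 8 M γ² (1+2γ²)(1 + ln Q)`, where `v⁰ = √(1+|v|²)`. -/
theorem stmt_19 (f : EuclideanSpace ℝ (Fin 3) → ℝ) (M γ Q : ℝ)
    (hmeas : Measurable f) (hγ : 1 ≤ γ) (hQ : Real.exp 1 ≤ Q)
    (hf0 : ∀ v, 0 ≤ f v) (hfM : ∀ v, f v ≤ M)
    (hsupp : ∀ v : EuclideanSpace ℝ (Fin 3), f v ≠ 0 →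
      |v 1| ≤ γ ∧ |v 2| ≤ γ ∧ |v 0| ≤ Q) :
    (∫ v : EuclideanSpace ℝ (Fin 3),
        (Real.sqrt (1 + ‖v‖ ^ 2) - (v 0) ^ 2 / Real.sqrt (1 + ‖v‖ ^ 2)) * f v) =
      (∫ v : EuclideanSpace ℝ (Fin 3),
        (1 + (v 1) ^ 2 + (v 2) ^ 2) / Real.sqrt (1 + ‖v‖ ^ 2) * f v) ∧
    (∫ v : EuclideanSpace ℝ (Fin 3),
        (1 + (v 1) ^ 2 + (v 2) ^ 2) / Real.sqrt (1 + ‖v‖ ^ 2) * f v) ≤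
      8 * M * γ ^ 2 * (1 + 2 * γ ^ 2) * (1 + Real.log Q) := by
  have hQ1 : (1:ℝ) ≤ Q := le_trans (by nlinarith [Real.add_one_le_exp (1:ℝ)]) hQ
  have hM : 0 ≤ M := le_trans (hf0 0) (hfM 0)
  have hnorm : ∀ v : EuclideanSpace ℝ (Fin 3),
      ‖v‖ ^ 2 = (v 0) ^ 2 + (v 1) ^ 2 + (v 2) ^ 2 := by
    intro v
    rw [EuclideanSpace.norm_eq, Real.sq_sqrt (by positivity)]
    simp [Fin.sum_univ_three, sq_abs]
  constructor
  · refine integral_congr_ae (Filter.Eventually.of_forall fun v => ?_)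
    have hpos : 0 < Real.sqrt (1 + ‖v‖ ^ 2) := Real.sqrt_pos.2 (by positivity)
    have hsq : Real.sqrt (1 + ‖v‖ ^ 2) ^ 2 = 1 + ‖v‖ ^ 2 := Real.sq_sqrt (by positivity)
    have key : Real.sqrt (1 + ‖v‖ ^ 2) - (v 0) ^ 2 / Real.sqrt (1 + ‖v‖ ^ 2)
        = (1 + (v 1) ^ 2 + (v 2) ^ 2) / Real.sqrt (1 + ‖v‖ ^ 2) := by
      rw [eq_div_iff hpos.ne', sub_mul, div_mul_cancel₀ _ hpos.ne']
      nlinarith [hsq, hnorm v]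
    show (Real.sqrt (1 + ‖v‖ ^ 2) - (v 0) ^ 2 / Real.sqrt (1 + ‖v‖ ^ 2)) * f v
        = (1 + (v 1) ^ 2 + (v 2) ^ 2) / Real.sqrt (1 + ‖v‖ ^ 2) * f v
    rw [key]
  · -- the bound
    set C : ℝ := M * (1 + 2 * γ ^ 2) with hC
    have hC0 : 0 ≤ C := by positivity
    set g : Fin 3 → ℝ → ℝ := fun i => if i = 0 then aux0 Q else aux1 γ with hg
    have hg0 : g 0 = aux0 Q := by simp [hg]
    have hg1 : g 1 = aux1 γ := by norm_num [hg]
    have hg2 : g 2 = aux1 γ := by rw [hg]; exact if_neg (by decide)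
    have hgInt : ∀ i, Integrable (g i) := by
      intro i
      by_cases h : i = 0
      · simpa [hg, h] using aux0_integrable Q
      · simpa [hg, h] using aux1_integrable γ
    have hProdInt : Integrable (fun x : Fin 3 → ℝ => ∏ i, g i (x i)) :=
      Integrable.fintype_prod hgInt
    have hFInt : Integrable (fun x : Fin 3 → ℝ => C * ∏ i, g i (x i)) :=
      hProdInt.const_mul C
    set e := (MeasurableEquiv.toLp 2 (Fin 3 → ℝ)).symm with he
    have hmp := EuclideanSpace.volume_preserving_symm_measurableEquiv_toLp (Fin 3)
    have hcomp : Integrable (fun v : EuclideanSpace ℝ (Fin 3) =>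
        C * ∏ i, g i ((e v) i)) :=
      (hmp.integrable_comp_emb e.measurableEmbedding
        (g := fun x : Fin 3 → ℝ => C * ∏ i, g i (x i))).2 hFInt
    have hev : ∀ (v : EuclideanSpace ℝ (Fin 3)) (i : Fin 3), (e v) i = v i := by
      intro v i; rfl
    have hprod : ∀ w : Fin 3 → ℝ,
        ∏ i, g i (w i) = aux0 Q (w 0) * (aux1 γ (w 1) * aux1 γ (w 2)) := by
      intro w
      rw [Fin.prod_univ_three, hg0, hg1, hg2]
      ring
    have hbound : ∀ v : EuclideanSpace ℝ (Fin 3),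
        (1 + (v 1) ^ 2 + (v 2) ^ 2) / Real.sqrt (1 + ‖v‖ ^ 2) * f v
          ≤ C * ∏ i, g i ((e v) i) := by
      intro v
      have hprodv : ∏ i, g i ((e v) i) = aux0 Q (v 0) * (aux1 γ (v 1) * aux1 γ (v 2)) := by
        rw [hprod (e v)]
        simp only [hev]
      have hprodnn : 0 ≤ ∏ i, g i ((e v) i) := by
        rw [hprodv]
        exact mul_nonneg (aux0_nonneg Q _) (mul_nonneg (aux1_nonneg γ _) (aux1_nonneg γ _))
      rcases eq_or_ne (f v) 0 with h0 | h0
      · rw [h0, mul_zero]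
        exact mul_nonneg hC0 hprodnn
      · obtain ⟨h1, h2, h3⟩ := hsupp v h0
        have ha1 : aux1 γ (v 1) = 1 :=
          Set.indicator_of_mem (Set.mem_Icc.2 (abs_le.1 h1)) _
        have ha2 : aux1 γ (v 2) = 1 :=
          Set.indicator_of_mem (Set.mem_Icc.2 (abs_le.1 h2)) _
        rw [hprodv, ha1, ha2, mul_one, mul_one]
        have hpos : 0 < Real.sqrt (1 + ‖v‖ ^ 2) := Real.sqrt_pos.2 (by positivity)
        have hs1 : max 1 |v 0| ≤ Real.sqrt (1 + ‖v‖ ^ 2) := by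
          refine max_le (Real.one_le_sqrt.2 (by nlinarith [sq_nonneg ‖v‖])) ?_
          rw [← Real.sqrt_sq_eq_abs]
          exact Real.sqrt_le_sqrt (by nlinarith [hnorm v, sq_nonneg (v 1), sq_nonneg (v 2)])
        have hmaxpos : 0 < max 1 |v 0| := lt_of_lt_of_le one_pos (le_max_left _ _)
        have hinv : (Real.sqrt (1 + ‖v‖ ^ 2))⁻¹ ≤ (max 1 |v 0|)⁻¹ :=
          inv_anti₀ hmaxpos hs1
        have hinv2 : (Real.sqrt (1 + ‖v‖ ^ 2))⁻¹ ≤ aux0 Q (v 0) :=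
          le_trans hinv (aux0_ge Q hQ1 _ h3)
        have hnum : 1 + (v 1) ^ 2 + (v 2) ^ 2 ≤ 1 + 2 * γ ^ 2 := by
          have e1 := abs_le.1 h1
          have e2 := abs_le.1 h2
          nlinarith
        calc (1 + (v 1) ^ 2 + (v 2) ^ 2) / Real.sqrt (1 + ‖v‖ ^ 2) * f v
            = (1 + (v 1) ^ 2 + (v 2) ^ 2) * (Real.sqrt (1 + ‖v‖ ^ 2))⁻¹ * f v := by
              rw [div_eq_mul_inv]
          _ ≤ (1 + 2 * γ ^ 2) * aux0 Q (v 0) * M := by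
              refine mul_le_mul (mul_le_mul hnum hinv2 (by positivity) (by positivity))
                (hfM v) (hf0 v) ?_
              exact mul_nonneg (by positivity) (aux0_nonneg Q _)
          _ = C * aux0 Q (v 0) := by rw [hC]; ring
    have hnn : ∀ v : EuclideanSpace ℝ (Fin 3),
        0 ≤ (1 + (v 1) ^ 2 + (v 2) ^ 2) / Real.sqrt (1 + ‖v‖ ^ 2) * f v := by
      intro v
      have := hf0 v
      positivity
    calc (∫ v : EuclideanSpace ℝ (Fin 3),
        (1 + (v 1) ^ 2 + (v 2) ^ 2) / Real.sqrt (1 + ‖v‖ ^ 2) * f v)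
        ≤ ∫ v : EuclideanSpace ℝ (Fin 3), C * ∏ i, g i ((e v) i) :=
          integral_mono_of_nonneg (Filter.Eventually.of_forall hnn) hcomp
            (Filter.Eventually.of_forall hbound)
      _ = ∫ x : Fin 3 → ℝ, C * ∏ i, g i (x i) :=
          hmp.integral_comp e.measurableEmbedding (fun x : Fin 3 → ℝ => C * ∏ i, g i (x i))
      _ = C * ∫ x : Fin 3 → ℝ, ∏ i, g i (x i) := integral_const_mul C _
      _ = C * ((2 + 2 * Real.log Q) * ((2 * γ) * (2 * γ))) := by
          rw [integral_fintype_prod_volume_eq_prod (ι := Fin 3) g, Fin.prod_univ_three, hg0, hg1, hg2,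
            aux0_integral Q hQ1, aux1_integral γ (by linarith)]
          ring
      _ = 8 * M * γ ^ 2 * (1 + 2 * γ ^ 2) * (1 + Real.log Q) := by
          rw [hC]; ring
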